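/- If a finite-dimensional real Lie algebra g admits an abelian generalized complex structure (for some closed 3-form H on g), then g is at most 2-step nilpotent: [[X,Y],Z] = 0 for all X, Y, Z ∈ g. -/
import Mathlib


set_option linter.unusedSectionVars false

open scoped TensorProduct

noncomputable section

namespace GKTest

variable {g : Type} [LieRing g] [LieAlgebra ℝ g]

/-- Auxiliary reindexing: `skip2 i j m` is the `m`-th element (0-indexed) of
`{0,…,k} \ {i,j}` when `i < j`. -/
def skip2 (i j m : ℕ) : ℕ := if m < i then m else if m + 1 < j then m + 1 else m + 2

lemma skip2_le (i j m : ℕ) : skip2 i j m ≤ m + 2 := by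
  unfold skip2; split_ifs <;> omega

/-- The argument list `(⁅X i, X j⁆, X₀, …, X̂ᵢ, …, X̂ⱼ, …, X_k)` used in the
Chevalley–Eilenberg formula. -/
def ceArg {k : ℕ} (X : Fin (k + 1) → g) (i j : Fin (k + 1)) : Fin k → g :=
  fun l =>
    if h : (l : ℕ) = 0 then ⁅X i, X j⁆
    else X ⟨skip2 (i : ℕ) (j : ℕ) ((l : ℕ) - 1), by
      have h1 := skip2_le (i : ℕ) (j : ℕ) ((l : ℕ) - 1)
      have h2 := l.isLt
      omega⟩

/-- The Chevalley–Eilenberg differential of an alternating `k`-form, as a raw function: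
`dα(X₀,…,X_k) = ∑_{i<j} (−1)^{i+j} α(⁅X_i,X_j⁆, X₀,…,X̂ᵢ,…,X̂ⱼ,…,X_k)`. -/
def ceD {k : ℕ} (α : g [⋀^Fin k]→ₗ[ℝ] ℝ) (X : Fin (k + 1) → g) : ℝ :=
  ∑ i : Fin (k + 1), ∑ j : Fin (k + 1),
    if (i : ℕ) < (j : ℕ) then (-1 : ℝ) ^ ((i : ℕ) + (j : ℕ)) * α (ceArg X i j) else 0

lemma upd0 (X Y Z W : g) : Function.update ![X, Y, Z] 0 W = ![W, Y, Z] := by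
  funext l; fin_cases l <;> simp [Function.update]

lemma upd1 (X Y Z W : g) : Function.update ![X, Y, Z] 1 W = ![X, W, Z] := by
  funext l; fin_cases l <;> simp [Function.update]

lemma upd2 (X Y Z W : g) : Function.update ![X, Y, Z] 2 W = ![X, Y, W] := by
  funext l; fin_cases l <;> simp [Function.update]

variable (H : g [⋀^Fin 3]→ₗ[ℝ] ℝ)

lemma H_add2 (X Y : g) (a b : g) :
    H ![X, Y, a + b] = H ![X, Y, a] + H ![X, Y, b] := by
  have h := H.toMultilinearMap.map_update_add ![X, Y, a] 2 a b
  simpa [upd2] using h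

lemma H_smul2 (X Y : g) (c : ℝ) (a : g) :
    H ![X, Y, c • a] = c * H ![X, Y, a] := by
  have h := H.toMultilinearMap.map_update_smul ![X, Y, a] 2 c a
  simpa [upd2, smul_eq_mul] using h

lemma H_add0 (X X' Y Z : g) :
    H ![X + X', Y, Z] = H ![X, Y, Z] + H ![X', Y, Z] := by
  have h := H.toMultilinearMap.map_update_add ![X, Y, Z] 0 X X'
  simpa [upd0] using h

lemma H_smul0 (c : ℝ) (X Y Z : g) :
    H ![c • X, Y, Z] = c * H ![X, Y, Z] := by
  have h := H.toMultilinearMap.map_update_smul ![X, Y, Z] 0 c X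
  simpa [upd0, smul_eq_mul] using h

lemma H_add1 (X Y Y' Z : g) :
    H ![X, Y + Y', Z] = H ![X, Y, Z] + H ![X, Y', Z] := by
  have h := H.toMultilinearMap.map_update_add ![X, Y, Z] 1 Y Y'
  simpa [upd1] using h

lemma H_smul1 (c : ℝ) (X Y Z : g) :
    H ![X, c • Y, Z] = c * H ![X, Y, Z] := by
  have h := H.toMultilinearMap.map_update_smul ![X, Y, Z] 1 c Y
  simpa [upd1, smul_eq_mul] using h

/-- The contraction `ι_Y ι_X H = H(X, Y, ·)` as a linear functional. -/
def hContr (X Y : g) : Module.Dual ℝ g where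
  toFun Z := H ![X, Y, Z]
  map_add' a b := H_add2 H X Y a b
  map_smul' c a := by simpa using H_smul2 H X Y c a

@[simp] lemma hContr_apply (X Y Z : g) : hContr H X Y Z = H ![X, Y, Z] := rfl

/-- The dual (second) component of the Courant bracket:
`ad*_X η − ad*_Y ξ + H(X,Y,·)` where `(ad*_X η)(Z) = −η(⁅X,Z⁆)`. -/
def courantDual (a b : g × Module.Dual ℝ g) : Module.Dual ℝ g :=
  -(b.2 ∘ₗ (LieAlgebra.ad ℝ g a.1 : g →ₗ[ℝ] g)) +
    a.2 ∘ₗ (LieAlgebra.ad ℝ g b.1 : g →ₗ[ℝ] g) + hContr H a.1 b.1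

@[simp] lemma courantDual_apply (a b : g × Module.Dual ℝ g) (Z : g) :
    courantDual H a b Z = -(b.2 ⁅a.1, Z⁆) + a.2 ⁅b.1, Z⁆ + H ![a.1, b.1, Z] := by
  simp [courantDual]

/-- The Courant bracket on `g ⊕ g*` (with background closed 3-form `H`), as a bilinear map:
`⟦(X,ξ),(Y,η)⟧ = (⁅X,Y⁆, ad*_X η − ad*_Y ξ + H(X,Y,·))`. -/
def courant : (g × Module.Dual ℝ g) →ₗ[ℝ] (g × Module.Dual ℝ g) →ₗ[ℝ] (g × Module.Dual ℝ g) :=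
  LinearMap.mk₂ ℝ (fun a b => (⁅a.1, b.1⁆, courantDual H a b))
    (fun a a' b => by
      refine Prod.ext (by simp [add_lie]) ?_
      ext Z
      simp [courantDual_apply, add_lie, H_add0, map_add]
      ring)
    (fun c a b => by
      refine Prod.ext (by simp [smul_lie]) ?_
      ext Z
      simp [courantDual_apply, smul_lie, H_smul0, map_smul, smul_eq_mul]
      ring)
    (fun a b b' => by
      refine Prod.ext (by simp [lie_add]) ?_
      ext Z
      simp [courantDual_apply, lie_add, H_add1, map_add]
      ring)
    (fun c a b => by
      refine Prod.ext (by simp [lie_smul]) ?_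
      ext Z
      simp [courantDual_apply, lie_smul, H_smul1, map_smul, smul_eq_mul]
      ring)

@[simp] lemma courant_apply (a b : g × Module.Dual ℝ g) :
    courant H a b = (⁅a.1, b.1⁆, courantDual H a b) := rfl

/-- The natural pairing `⟨(X,ξ),(Y,η)⟩ = ½(η(X) + ξ(Y))` on `g ⊕ g*`. -/
def npair {V : Type} [AddCommGroup V] [Module ℝ V]
    (a b : V × Module.Dual ℝ V) : ℝ :=
  (b.2 a.1 + a.2 b.1) / 2

/-- The `ℂ`-bilinear extension of an `ℝ`-bilinear map to the complexification. -/
def cxBil {M : Type} [AddCommGroup M] [Module ℝ M]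
    (B : M →ₗ[ℝ] M →ₗ[ℝ] M) : (ℂ ⊗[ℝ] M) →ₗ[ℂ] (ℂ ⊗[ℝ] M) →ₗ[ℂ] (ℂ ⊗[ℝ] M) :=
  TensorProduct.curry (((TensorProduct.lift B).baseChange ℂ) ∘ₗ
    (TensorProduct.AlgebraTensorModule.distribBaseChange ℝ ℂ M M).symm.toLinearMap)

/-- The `i`-eigenspace of the `ℂ`-linear extension of `J` in the complexification. -/
def eigI {M : Type} [AddCommGroup M] [Module ℝ M] (J : M →ₗ[ℝ] M) :
    Submodule ℂ (ℂ ⊗[ℝ] M) :=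
  Module.End.eigenspace (J.baseChange ℂ) Complex.I

/-- The `(−i)`-eigenspace (i.e. the complex conjugate of the `i`-eigenspace). -/
def eigIbar {M : Type} [AddCommGroup M] [Module ℝ M] (J : M →ₗ[ℝ] M) :
    Submodule ℂ (ℂ ⊗[ℝ] M) :=
  Module.End.eigenspace (J.baseChange ℂ) (-Complex.I)

/-- A generalized complex structure on a Lie algebra `g` with closed 3-form `H`:
an `ℝ`-linear `J` on `g ⊕ g*` with `J² = −id`, preserving the natural pairing, whose
`i`-eigenspace in the complexification is closed under the (complexified) Courant bracket. -/
def IsGCS (J : (g × Module.Dual ℝ g) →ₗ[ℝ] (g × Module.Dual ℝ g)) : Prop :=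
  (∀ v, J (J v) = -v) ∧
  (∀ u v, npair (J u) (J v) = npair u v) ∧
  (∀ u ∈ eigI J, ∀ v ∈ eigI J, cxBil (courant H) u v ∈ eigI J)

end GKTest

namespace GKTest

/-- An *abelian* generalized complex structure: the Courant bracket (extended
`ℂ`-bilinearly) vanishes identically on the `i`-eigenspace `L`. -/
def IsAbelianGCS {g : Type} [LieRing g] [LieAlgebra ℝ g] (H : g [⋀^Fin 3]→ₗ[ℝ] ℝ)
    (J : (g × Module.Dual ℝ g) →ₗ[ℝ] (g × Module.Dual ℝ g)) : Prop :=
  IsGCS H J ∧ ∀ u ∈ eigI J, ∀ v ∈ eigI J, cxBil (courant H) u v = 0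

/-! ### Auxiliary lemmas for the proof -/

lemma cxBil_tmul {M : Type} [AddCommGroup M] [Module ℝ M]
    (B : M →ₗ[ℝ] M →ₗ[ℝ] M) (z w : ℂ) (m n : M) :
    cxBil B (z ⊗ₜ[ℝ] m) (w ⊗ₜ[ℝ] n) = (z * w) ⊗ₜ[ℝ] (B m n) := by
  simp [cxBil, TensorProduct.AlgebraTensorModule.distribBaseChange,
    TensorProduct.AlgebraTensorModule.assoc, TensorProduct.smul_tmul', smul_eq_mul, mul_comm]

lemma tensor_parts {M : Type} [AddCommGroup M] [Module ℝ M] (x y : M)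
    (h : (1 : ℂ) ⊗ₜ[ℝ] x + (-Complex.I) ⊗ₜ[ℝ] y = 0) : x = 0 ∧ y = 0 := by
  constructor
  · have := congrArg (TensorProduct.lift ((LinearMap.lsmul ℝ M).comp Complex.reLm)) h
    simpa using this
  · have := congrArg (TensorProduct.lift ((LinearMap.lsmul ℝ M).comp Complex.imLm)) h
    simpa using this

lemma mem_eigI_plus {M : Type} [AddCommGroup M] [Module ℝ M] (J : M →ₗ[ℝ] M)
    (hJ2 : ∀ v, J (J v) = -v) (a : M) :
    (1 : ℂ) ⊗ₜ[ℝ] a + (-Complex.I) ⊗ₜ[ℝ] (J a) ∈ eigI J := by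
  rw [eigI, Module.End.mem_eigenspace_iff]
  rw [map_add, LinearMap.baseChange_tmul, LinearMap.baseChange_tmul, hJ2, smul_add,
    TensorProduct.smul_tmul', TensorProduct.smul_tmul']
  simp only [smul_eq_mul, mul_one, mul_neg, Complex.I_mul_I, neg_neg,
    TensorProduct.tmul_neg, TensorProduct.neg_tmul]
  abel

lemma H_zero0 {g : Type} [LieRing g] [LieAlgebra ℝ g] (H : g [⋀^Fin 3]→ₗ[ℝ] ℝ)
    (Y Z : g) : H ![0, Y, Z] = 0 :=
  H.toMultilinearMap.map_coord_zero 0 rfl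

lemma H_swap12 {g : Type} [LieRing g] [LieAlgebra ℝ g] (H : g [⋀^Fin 3]→ₗ[ℝ] ℝ)
    (X Y Z : g) : H ![X, Z, Y] = - H ![X, Y, Z] := by
  have h := H.map_swap ![X, Y, Z] (i := 1) (j := 2) (by decide)
  have e : (![X, Y, Z] ∘ Equiv.swap (1 : Fin 3) 2) = ![X, Z, Y] := by
    funext l; fin_cases l <;> simp [Equiv.swap_apply_def]
  rw [e] at h; exact h

/-- If a finite-dimensional real Lie algebra admits an abelian
generalized complex structure (for some closed 3-form `H`), then it is at most
2-step nilpotent. -/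
theorem two_step_nilpotent_of_abelian_GCS
    (g : Type) [LieRing g] [LieAlgebra ℝ g] [FiniteDimensional ℝ g]
    (H : g [⋀^Fin 3]→ₗ[ℝ] ℝ) (hH : ∀ X : Fin 4 → g, ceD H X = 0)
    (J : (g × Module.Dual ℝ g) →ₗ[ℝ] (g × Module.Dual ℝ g))
    (hJ : IsAbelianGCS H J) :
    ∀ X Y Z : g, ⁅⁅X, Y⁆, Z⁆ = 0 := by
  obtain ⟨⟨hJ2, -, -⟩, habs⟩ := hJ
  -- Key real relations extracted from the abelian condition on the `i`-eigenspace.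
  have key : ∀ a b : g × Module.Dual ℝ g,
      courant H a b - courant H (J a) (J b) = 0 ∧
      courant H (J a) b + courant H a (J b) = 0 := by
    intro a b
    have h0 := habs _ (mem_eigI_plus J hJ2 a) _ (mem_eigI_plus J hJ2 b)
    rw [map_add, map_add, LinearMap.add_apply, LinearMap.add_apply,
      cxBil_tmul, cxBil_tmul, cxBil_tmul, cxBil_tmul] at h0
    have h1 : (1 : ℂ) ⊗ₜ[ℝ] (courant H a b - courant H (J a) (J b))
        + (-Complex.I) ⊗ₜ[ℝ] (courant H (J a) b + courant H a (J b)) = 0 := by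
      rw [← h0]
      simp only [one_mul, mul_one, neg_mul, mul_neg, Complex.I_mul_I, neg_neg,
        TensorProduct.tmul_sub, TensorProduct.tmul_add, TensorProduct.neg_tmul,
        TensorProduct.tmul_neg]
      abel
    exact tensor_parts _ _ h1
  have rel1 : ∀ a b : g × Module.Dual ℝ g,
      courant H a b = courant H (J a) (J b) := fun a b => sub_eq_zero.mp (key a b).1
  have rel2 : ∀ a b : g × Module.Dual ℝ g,
      courant H (J a) b + courant H a (J b) = 0 := fun a b => (key a b).2
  -- First components of rel2 with purely vector arguments
  have hA : ∀ X Y : g,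
      ⁅(J (X, (0 : Module.Dual ℝ g))).1, Y⁆ + ⁅X, (J (Y, (0 : Module.Dual ℝ g))).1⁆ = 0 := by
    intro X Y
    have h := congrArg Prod.fst (rel2 (X, (0 : Module.Dual ℝ g)) (Y, (0 : Module.Dual ℝ g)))
    simpa [courant_apply] using h
  -- Dual component of rel2 with a covector and a vector
  have hd : ∀ (ξ : Module.Dual ℝ g) (Y Z : g),
      (J ((0 : g), ξ)).2 ⁅Y, Z⁆ + H ![(J ((0 : g), ξ)).1, Y, Z]
        + ξ ⁅(J (Y, (0 : Module.Dual ℝ g))).1, Z⁆ = 0 := by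
    intro ξ Y Z
    have h := congrArg Prod.snd (rel2 ((0 : g), ξ) (Y, (0 : Module.Dual ℝ g)))
    have h2 := congrArg (fun φ : Module.Dual ℝ g => φ Z) h
    simp only [Prod.snd_add, courant_apply, LinearMap.add_apply, courantDual_apply,
      LinearMap.zero_apply, zero_lie, map_zero, neg_zero, zero_add, add_zero,
      H_zero0, Prod.snd_zero] at h2
    linarith [h2]
  -- The image of `g` under the vector part of `J` brackets to zero
  have hAc : ∀ Y Z : g, ⁅(J (Y, (0 : Module.Dual ℝ g))).1, Z⁆ = 0 := by
    intro Y Z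
    rw [← Module.forall_dual_apply_eq_zero_iff ℝ]
    intro ξ
    have h1 := hd ξ Y Z
    have h2 := hd ξ Z Y
    have a1 : (J ((0 : g), ξ)).2 ⁅Z, Y⁆ = -((J ((0 : g), ξ)).2 ⁅Y, Z⁆) := by
      rw [← lie_skew, map_neg]
    have a2 : H ![(J ((0 : g), ξ)).1, Z, Y] = - H ![(J ((0 : g), ξ)).1, Y, Z] :=
      H_swap12 H _ _ _
    have a3 : ξ ⁅(J (Z, (0 : Module.Dual ℝ g))).1, Y⁆
        = ξ ⁅(J (Y, (0 : Module.Dual ℝ g))).1, Z⁆ := by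
      have e1 : ⁅(J (Z, (0 : Module.Dual ℝ g))).1, Y⁆
          = -⁅Z, (J (Y, (0 : Module.Dual ℝ g))).1⁆ :=
        eq_neg_of_add_eq_zero_left (hA Z Y)
      rw [e1, lie_skew]
    rw [a1, a2, a3] at h2
    linarith [h1, h2]
  intro X Y Z
  have hXY : ⁅X, Y⁆ = 0 := by
    have h := congrArg Prod.fst (rel1 (X, (0 : Module.Dual ℝ g)) (Y, (0 : Module.Dual ℝ g)))
    simp only [courant_apply] at h
    rw [h]
    exact hAc X _
  simp [hXY]

end GKTest
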